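/- Let Δ ∈ (0,1], C > 0, λ ∈ [0,1), τ₀, ζ positive integers, and k ≥ 1 an integer. If ℓ is a positive integer with ℓ > (4/Δ²)·( C(1 + ζ/τ₀)/(√(ζτ₀)(1−λ)) + √(6·log k) )², then Δ − 2·( (C/(ℓ(1−λ)))·(1/τ₀ + (1/ζ)·log(1 + ℓζ/τ₀)) + √(6·log k / ℓ) ) > 0. -/

import Mathlib

lemma aux_log_add_one_le_sqrt {x : ℝ} (hx : 0 ≤ x) :
    Real.log (1 + x) ≤ Real.sqrt x := by
  set s := Real.sqrt x with hs
  have hs0 : 0 ≤ s := Real.sqrt_nonneg x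
  have hs2 : s ^ 2 = x := Real.sq_sqrt hx
  rw [Real.log_le_iff_le_exp (by linarith)]
  have h8 : Real.exp s = (Real.exp (s / 8)) ^ 8 := by
    rw [← Real.exp_nat_mul]; push_cast; ring_nf
  have hb : (1 + s / 8) ^ 8 ≤ (Real.exp (s / 8)) ^ 8 := by
    apply pow_le_pow_left₀ (by positivity)
    linarith [Real.add_one_le_exp (s / 8)]
  have hpoly : 1 + x ≤ (1 + s / 8) ^ 8 := by
    nlinarith [mul_nonneg hs0 (sq_nonneg (s - 72/28)), sq_nonneg s,
      mul_nonneg hs0 (sq_nonneg s), sq_nonneg (s*s),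
      mul_nonneg hs0 (sq_nonneg (s*s)), mul_nonneg (mul_nonneg hs0 hs0) (sq_nonneg (s*s)),
      mul_nonneg (mul_nonneg hs0 hs0) (sq_nonneg s)]
  calc 1 + x ≤ (1 + s / 8) ^ 8 := hpoly
    _ ≤ Real.exp (s/8) ^ 8 := hb
    _ = Real.exp s := h8.symm

set_option maxHeartbeats 1000000 in
/-- sufficient sample size for EpochUCB under time-averaged feedback,
`γ = 1`.  If `ℓ > (4/Δ²)(C(1 + ζ/τ₀)/(√(ζτ₀)(1-λ)) + √(6 log k))²`, then twice the
confidence window falls below the gap `Δ`. -/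
theorem epochucb_sample_size_time_averaged
    (Δ C lam : ℝ) (τ₀ ζ k ℓ : ℕ)
    (hΔ0 : 0 < Δ) (hΔ1 : Δ ≤ 1) (hC : 0 < C) (hlam0 : 0 ≤ lam) (hlam1 : lam < 1)
    (hτ₀ : 0 < τ₀) (hζ : 0 < ζ) (hk : 1 ≤ k) (hℓ0 : 0 < ℓ)
    (hℓ : (ℓ : ℝ) >
      (4 / Δ ^ 2) *
        (C * (1 + (ζ : ℝ) / τ₀) / (Real.sqrt ((ζ : ℝ) * τ₀) * (1 - lam)) +
          Real.sqrt (6 * Real.log k)) ^ 2) :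
    Δ - 2 * ((C / ((ℓ : ℝ) * (1 - lam))) *
        (1 / (τ₀ : ℝ) + (1 / (ζ : ℝ)) * Real.log (1 + (ℓ : ℝ) * ζ / τ₀)) +
      Real.sqrt (6 * Real.log k / ℓ)) > 0 := by
  have hK : (0:ℝ) < 1 - lam := by linarith
  set l : ℝ := (ℓ:ℝ) with hldef
  set τ : ℝ := (τ₀:ℝ) with htdef
  set z : ℝ := (ζ:ℝ) with hzdef
  have hl1 : (1:ℝ) ≤ l := by rw [hldef]; exact_mod_cast hℓ0
  have ht1 : (1:ℝ) ≤ τ := by rw [htdef]; exact_mod_cast hτ₀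
  have hz1 : (1:ℝ) ≤ z := by rw [hzdef]; exact_mod_cast hζ
  have hl0 : (0:ℝ) < l := by linarith
  have ht0 : (0:ℝ) < τ := by linarith
  have hz0 : (0:ℝ) < z := by linarith
  have hlogk : 0 ≤ Real.log k := Real.log_nonneg (by exact_mod_cast hk)
  set B : ℝ := Real.sqrt (6 * Real.log k) with hBdef
  have hB0 : 0 ≤ B := Real.sqrt_nonneg _
  set A : ℝ := C * (1 + z / τ) / (Real.sqrt (z * τ) * (1 - lam)) with hAdef
  have hA0 : 0 < A := by
    apply div_pos (by positivity)
    have hzz : 0 < Real.sqrt (z * τ) := Real.sqrt_pos.2 (by positivity)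
    positivity
  set sl : ℝ := Real.sqrt l with hsldef
  have hsl1 : 1 ≤ sl := Real.one_le_sqrt.2 hl1
  have hsl0 : 0 < sl := by linarith
  have hsl2 : sl ^ 2 = l := Real.sq_sqrt hl0.le
  -- Step 1 : 2 (A + B) < Δ √l, then discard hℓ
  have hstep1 : 2 * (A + B) < Δ * sl := by
    have hD2 : (0:ℝ) < Δ ^ 2 := by positivity
    have h5 : Δ ^ 2 * ((4 / Δ ^ 2) * (A + B) ^ 2) < Δ ^ 2 * l :=
      mul_lt_mul_of_pos_left hℓ hD2
    have h6 : Δ ^ 2 * ((4 / Δ ^ 2) * (A + B) ^ 2) = (2 * (A + B)) ^ 2 := by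
      field_simp; ring
    have h7 : Δ ^ 2 * l = (Δ * sl) ^ 2 := by rw [mul_pow, hsl2]
    have h4 : (2 * (A + B)) ^ 2 < (Δ * sl) ^ 2 := by rw [← h6, ← h7]; exact h5
    exact lt_of_pow_lt_pow_left₀ 2 (by positivity) h4
  clear hℓ
  set x : ℝ := l * z / τ with hxdef
  have hx0 : 0 < x := by positivity
  set s : ℝ := Real.sqrt x with hsdef
  have hs0 : 0 < s := Real.sqrt_pos.2 hx0
  have hs2 : s ^ 2 = x := Real.sq_sqrt hx0.le
  set L : ℝ := Real.log (1 + x) with hLdef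
  have hL1 : L ≤ s := aux_log_add_one_le_sqrt hx0.le
  have hL2 : L ≤ s ^ 2 := by
    rw [hs2]
    have := Real.log_le_sub_one_of_pos (show (0:ℝ) < 1 + x by linarith)
    linarith
  have hzl : z * l = s ^ 2 * τ := by
    rw [hs2, hxdef]; field_simp
  -- key inequality : z + τ L ≤ τ s + z s
  have key : z + τ * L ≤ τ * s + z * s := by
    rcases le_total s 1 with h | h
    · have t1 : τ * L ≤ τ * s ^ 2 := mul_le_mul_of_nonneg_left hL2 ht0.le
      have h1 : z ≤ s ^ 2 * τ := by
        rw [← hzl]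
        calc z = z * 1 := (mul_one z).symm
          _ ≤ z * l := mul_le_mul_of_nonneg_left hl1 hz0.le
      have h2 : s ^ 2 * τ ≤ s * τ := by nlinarith [mul_pos hs0 ht0]
      have h3 : 0 ≤ (1 - s) * (s * τ - z) :=
        mul_nonneg (by linarith) (by linarith)
      nlinarith [t1, h3]
    · have t1 : τ * L ≤ τ * s := mul_le_mul_of_nonneg_left hL1 ht0.le
      have t2 : z * 1 ≤ z * s := mul_le_mul_of_nonneg_left h hz0.le
      linarith
  -- P2
  have P2 : (z + τ * L) * (τ * s) ≤ (τ + z) * (l * z) := by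
    have hmul : (z + τ * L) * (τ * s) ≤ (τ * s + z * s) * (τ * s) :=
      mul_le_mul_of_nonneg_right key (by positivity)
    have e : (τ * s + z * s) * (τ * s) = (τ + z) * (l * z) := by
      linear_combination (-(τ + z)) * hzl
    linarith [hmul, e.le, e.ge]
  -- collapse the sqrt product
  have hsqzt : Real.sqrt (z * τ) * sl = τ * s := by
    rw [hsldef, ← Real.sqrt_mul (by positivity) l]
    rw [show z * τ * l = τ ^ 2 * x by rw [hxdef]; field_simp]
    rw [Real.sqrt_mul (by positivity) x, Real.sqrt_sq ht0.le, hsdef]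
  -- bound on the first term
  have hT1 : C / (l * (1 - lam)) * (1 / τ + 1 / z * L) ≤ A / sl := by
    have e0 : 1 / τ + 1 / z * L = (z + τ * L) / (τ * z) := by
      field_simp
    have eL : C / (l * (1 - lam)) * (1 / τ + 1 / z * L)
        = C * (z + τ * L) / (l * (1 - lam) * (τ * z)) := by
      rw [e0, div_mul_div_comm]
    have eR : A / sl = C * (τ + z) / (τ * s * (1 - lam) * τ) := by
      rw [hAdef, div_div, show Real.sqrt (z * τ) * (1 - lam) * sl
          = τ * s * (1 - lam) by rw [← hsqzt]; ring]
      rw [show (1 + z / τ) = (τ + z) / τ by field_simp]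
      rw [mul_div_assoc', div_div]
      ring
    rw [eL, eR, div_le_div_iff₀ (by positivity) (by positivity)]
    have h := mul_le_mul_of_nonneg_left P2 (show (0:ℝ) ≤ C * (1 - lam) * τ by positivity)
    nlinarith [h]
  -- the sqrt term
  have hT2 : Real.sqrt (6 * Real.log k / l) = B / sl := by
    rw [Real.sqrt_div (by positivity) l]
  -- combine
  have hfin : C / (l * (1 - lam)) * (1 / τ + 1 / z * L) + Real.sqrt (6 * Real.log k / l)
      < Δ / 2 := by
    rw [hT2]
    have h1 : A / sl + B / sl < Δ / 2 := by
      rw [← add_div, div_lt_iff₀ hsl0]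
      nlinarith [hstep1]
    linarith [hT1]
  linarith [hfin]
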